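/- Let n = 4 and suppose Q is a nonzero supercharge with [Q,Q] = 0, invariant under a φ-twisted action of ι_i(so(3;ℂ)) ⊂ so(4;ℂ) for i = 1 or 2 (the inclusion of one sl(2;ℂ) factor). Then the image of [Q,−] : Σ → V_ℂ is either a 2-dimensional subspace (Q is holomorphic) or all of V_ℂ (Q is topological). -/

import Mathlib

/-- In dimension 4, `V` is the 4-dimensional vector representation of
`so(4;ℂ)`, which as a module over one `sl(2;ℂ)` factor `L = ι_i(so(3;ℂ))` decomposes as the
direct sum of two 2-dimensional irreducible subrepresentations `W₁, W₂`.  If `Q ≠ 0` is a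
supercharge with `[Q,Q] = 0`, invariant under the `φ`-twisted action of `L`, and the pairing
`Γ` is equivariant and non-degenerate, then the image of `[Q,−] = Γ(Q,−) : Σ → V` is either a
2-dimensional subspace (`Q` is holomorphic) or all of `V` (`Q` is topological). -/
theorem supercharge_holomorphic_or_topological
    {L Sp V : Type*} [LieRing L] [LieAlgebra ℂ L]
    [AddCommGroup Sp] [Module ℂ Sp] [LieRingModule L Sp] [LieModule ℂ L Sp]
    [AddCommGroup V] [Module ℂ V] [LieRingModule L V] [LieModule ℂ L V]
    [FiniteDimensional ℂ V] (hdim : Module.finrank ℂ V = 4)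
    (W₁ W₂ : LieSubmodule ℂ L V)
    (hinf : W₁ ⊓ W₂ = ⊥) (hsup : W₁ ⊔ W₂ = ⊤)
    (hW₁ : Module.finrank ℂ W₁ = 2) (hW₂ : Module.finrank ℂ W₂ = 2)
    (hirr₁ : ∀ U : LieSubmodule ℂ L V, U ≤ W₁ → U = ⊥ ∨ U = W₁)
    (hirr₂ : ∀ U : LieSubmodule ℂ L V, U ≤ W₂ → U = ⊥ ∨ U = W₂)
    (Γ : Sp →ₗ[ℂ] Sp →ₗ[ℂ] V)
    (hequiv : ∀ (x : L) (s t : Sp), ⁅x, Γ s t⁆ = Γ ⁅x, s⁆ t + Γ s ⁅x, t⁆)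
    (hnondeg : ∀ s : Sp, s ≠ 0 → Γ s ≠ 0)
    (Q : Sp) (hQ : Q ≠ 0) (hQQ : Γ Q Q = 0) (hinv : ∀ x : L, ⁅x, Q⁆ = 0) :
    Module.finrank ℂ (LinearMap.range (Γ Q)) = 2 ∨ Function.Surjective (Γ Q) := by
  classical
  -- The range of `Γ Q` is a Lie submodule, since `Q` is invariant.
  set R : LieSubmodule ℂ L V :=
    { toSubmodule := LinearMap.range (Γ Q)
      lie_mem := by
        rintro x v ⟨t, rfl⟩
        exact ⟨⁅x, t⁆, by rw [hequiv x Q t, hinv x, map_zero, LinearMap.zero_apply, zero_add]⟩ }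
    with hR
  have hRrange : (R : Submodule ℂ V) = LinearMap.range (Γ Q) := rfl
  -- Any Lie submodule containing `W₂` is `W₂` or `⊤`.
  have key : ∀ S : LieSubmodule ℂ L V, W₂ ≤ S → S = W₂ ∨ S = ⊤ := by
    intro S hS
    rcases hirr₁ (S ⊓ W₁) inf_le_right with h | h
    · -- `S ⊓ W₁ = ⊥`
      have hsupS : S ⊔ W₁ = ⊤ := by
        rw [eq_top_iff, ← hsup]
        exact sup_le le_sup_right (le_sup_of_le_left hS)
      have hdim' := Submodule.finrank_sup_add_finrank_inf_eq
        (S : Submodule ℂ V) (W₁ : Submodule ℂ V)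
      rw [← LieSubmodule.sup_toSubmodule, ← LieSubmodule.inf_toSubmodule,
        hsupS, h, LieSubmodule.top_toSubmodule, LieSubmodule.bot_toSubmodule,
        finrank_top, finrank_bot, hdim, add_zero] at hdim'
      have eW₁ : Module.finrank ℂ ((W₁ : Submodule ℂ V) : Submodule ℂ V) = 2 := hW₁
      -- `finrank S = 2`, so `S = W₂`
      left
      have hSfin : Module.finrank ℂ (S : Submodule ℂ V) = 2 := by omega
      have : (W₂ : Submodule ℂ V) = (S : Submodule ℂ V) :=
        Submodule.eq_of_le_of_finrank_eq hS (by rw [hSfin]; exact hW₂)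
      exact ((LieSubmodule.toSubmodule_inj _ _).mp this).symm
    · -- `W₁ ≤ S`
      right
      have hW₁S : W₁ ≤ S := h ▸ inf_le_left
      rw [eq_top_iff, ← hsup]
      exact sup_le hW₁S hS
  -- `R ≠ ⊥`
  have hRne : R ≠ ⊥ := by
    intro hbot
    apply hnondeg Q hQ
    ext t
    have : Γ Q t ∈ R := ⟨t, rfl⟩
    rw [hbot, LieSubmodule.mem_bot] at this
    simpa using this
  rcases key (R ⊔ W₂) le_sup_right with h | h
  · -- `R ≤ W₂`, so `R = W₂` and has dimension 2
    have hRW₂ : R ≤ W₂ := le_sup_left.trans h.le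
    rcases hirr₂ R hRW₂ with h' | h'
    · exact absurd h' hRne
    · left
      have : (R : Submodule ℂ V) = (W₂ : Submodule ℂ V) := by rw [h']
      rw [← hRrange, this]
      exact hW₂
  · -- `R ⊔ W₂ = ⊤`
    have hdim' := Submodule.finrank_sup_add_finrank_inf_eq
      (R : Submodule ℂ V) (W₂ : Submodule ℂ V)
    rw [← LieSubmodule.sup_toSubmodule, ← LieSubmodule.inf_toSubmodule, h,
      LieSubmodule.top_toSubmodule, finrank_top, hdim] at hdim'
    have eW₂ : Module.finrank ℂ ((W₂ : Submodule ℂ V) : Submodule ℂ V) = 2 := hW₂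
    rcases hirr₂ (R ⊓ W₂) inf_le_right with h' | h'
    · -- `R ⊓ W₂ = ⊥`, so `finrank R = 2`
      left
      rw [h', LieSubmodule.bot_toSubmodule, finrank_bot] at hdim'
      rw [← hRrange]
      omega
    · -- `R ⊓ W₂ = W₂`, so `finrank R = 4` and `R = ⊤`
      right
      have h2 : Module.finrank ℂ ((R ⊓ W₂ : LieSubmodule ℂ L V) : Submodule ℂ V) = 2 := by
        rw [h']; exact hW₂
      rw [h2] at hdim'
      have hRfin : Module.finrank ℂ (R : Submodule ℂ V) = 4 := by omega
      have : (R : Submodule ℂ V) = ⊤ :=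
        Submodule.eq_top_of_finrank_eq (by rw [hRfin, hdim])
      rw [← LinearMap.range_eq_top, ← hRrange, this]
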